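/- Let k be a commutative ring, A a unital k-algebra, and (C_r)_{r≥0} a unital formal associative deformation of A. Let T : ℕ → End_k(A) with T(0) = id and T(r)(1) = 0 for all r ≥ 1, and let S : ℕ → End_k(A) be its convolution inverse (S(0) = id and ∑_{i+j=n} T(i) ∘ S(j) = 0 = ∑_{i+j=n} S(i) ∘ T(j) for n ≥ 1). Define C'_n(a, b) := ∑_{i+j+l+m=n} S(i)(C_j(T(l)(a), T(m)(b))). Then (C'_r)_{r≥0} is again a unital formal associative deformation of A with the same zeroth-order term: C'₀(a, b) = a·b, the order-by-order associativity conditions hold for (C'_r), and C'_r(1, a) = 0 = C'_r(a, 1) for all r ≥ 1. -/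

import Mathlib

open Finset

variable {k : Type*} [CommRing k] {A : Type*} [Ring A] [Algebra k A]

/-- The deformation transported along an equivalence transformation `T` with convolution
inverse `S`:  `C'_n(a,b) := ∑_{i+j+l+m=n} S_i(C_j(T_l(a), T_m(b)))`, encoding
`f ⋆' g = T⁻¹(Tf ⋆ Tg)`. -/
def transported (C : ℕ → A →ₗ[k] A →ₗ[k] A) (T S : ℕ → A →ₗ[k] A) :
    ℕ → A → A → A :=
  fun n a b => ∑ p ∈ antidiagonal n, ∑ q ∈ antidiagonal p.2, ∑ r ∈ antidiagonal q.2,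
    S p.1 (C q.1 (T r.1 a) (T r.2 b))

/-! ### Auxiliary rebracketing lemmas for nested antidiagonal sums -/

private lemma twist3 {M : Type*} [AddCommMonoid M] (n : ℕ) (F : ℕ → ℕ → ℕ → M) :
    (∑ p ∈ antidiagonal n, ∑ q ∈ antidiagonal p.2, F p.1 q.1 q.2) =
    ∑ p ∈ antidiagonal n, ∑ q ∈ antidiagonal p.1, F q.1 q.2 p.2 := by
  rw [Finset.sum_sigma', Finset.sum_sigma']
  refine Finset.sum_nbij' (fun x => ⟨(x.1.1 + x.2.1, x.2.2), (x.1.1, x.2.1)⟩)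
    (fun x => ⟨(x.2.1, x.2.2 + x.1.2), (x.2.2, x.1.2)⟩) ?_ ?_ ?_ ?_ ?_
  · rintro ⟨⟨p1,p2⟩,⟨q1,q2⟩⟩ h
    simp only [Finset.mem_sigma, Finset.HasAntidiagonal.mem_antidiagonal, and_true, true_and] at h ⊢
    omega
  · rintro ⟨⟨p1,p2⟩,⟨q1,q2⟩⟩ h
    simp only [Finset.mem_sigma, Finset.HasAntidiagonal.mem_antidiagonal, and_true, true_and] at h ⊢
    omega
  · rintro ⟨⟨p1,p2⟩,⟨q1,q2⟩⟩ h
    simp only [Finset.mem_sigma, Finset.HasAntidiagonal.mem_antidiagonal] at h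
    simp only [Sigma.mk.inj_iff, heq_eq_eq, Prod.mk.injEq, and_true, true_and]
    omega
  · rintro ⟨⟨p1,p2⟩,⟨q1,q2⟩⟩ h
    simp only [Finset.mem_sigma, Finset.HasAntidiagonal.mem_antidiagonal] at h
    simp only [Sigma.mk.inj_iff, heq_eq_eq, Prod.mk.injEq, and_true, true_and]
    omega
  · rintro ⟨⟨p1,p2⟩,⟨q1,q2⟩⟩ h
    rfl

private lemma reb5L {M : Type*} [AddCommMonoid M] (n : ℕ) (H : ℕ → ℕ → ℕ → ℕ → ℕ → M) :
    (∑ p ∈ antidiagonal n, ∑ q ∈ antidiagonal p.2, ∑ r ∈ antidiagonal q.1,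
      ∑ s ∈ antidiagonal r.2, H p.1 r.1 s.1 s.2 q.2) =
    ∑ w ∈ antidiagonal n, ∑ x ∈ antidiagonal w.2, ∑ y ∈ antidiagonal x.2,
      ∑ z ∈ antidiagonal w.1, H z.1 z.2 x.1 y.1 y.2 := by
  simp only [Finset.sum_sigma']
  refine Finset.sum_nbij'
    (fun a => ⟨(a.1.1 + a.2.2.1.1, a.2.2.2.1 + (a.2.2.2.2 + a.2.1.2)),
      (a.2.2.2.1, a.2.2.2.2 + a.2.1.2), (a.2.2.2.2, a.2.1.2), (a.1.1, a.2.2.1.1)⟩)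
    (fun b => ⟨(b.2.2.2.1, b.2.2.2.2 + (b.2.1.1 + (b.2.2.1.1 + b.2.2.1.2))),
      (b.2.2.2.2 + (b.2.1.1 + b.2.2.1.1), b.2.2.1.2),
      (b.2.2.2.2, b.2.1.1 + b.2.2.1.1), (b.2.1.1, b.2.2.1.1)⟩) ?_ ?_ ?_ ?_ ?_
  · rintro ⟨⟨p1,p2⟩,⟨q1,q2⟩,⟨r1,r2⟩,⟨s1,s2⟩⟩ h
    simp only [Finset.mem_sigma, Finset.HasAntidiagonal.mem_antidiagonal, and_true, true_and] at h ⊢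
    omega
  · rintro ⟨⟨p1,p2⟩,⟨q1,q2⟩,⟨r1,r2⟩,⟨s1,s2⟩⟩ h
    simp only [Finset.mem_sigma, Finset.HasAntidiagonal.mem_antidiagonal, and_true, true_and] at h ⊢
    omega
  · rintro ⟨⟨p1,p2⟩,⟨q1,q2⟩,⟨r1,r2⟩,⟨s1,s2⟩⟩ h
    simp only [Finset.mem_sigma, Finset.HasAntidiagonal.mem_antidiagonal] at h
    simp only [Sigma.mk.inj_iff, heq_eq_eq, Prod.mk.injEq, and_true, true_and]
    omega
  · rintro ⟨⟨p1,p2⟩,⟨q1,q2⟩,⟨r1,r2⟩,⟨s1,s2⟩⟩ h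
    simp only [Finset.mem_sigma, Finset.HasAntidiagonal.mem_antidiagonal] at h
    simp only [Sigma.mk.inj_iff, heq_eq_eq, Prod.mk.injEq, and_true, true_and]
    omega
  · rintro ⟨⟨p1,p2⟩,⟨q1,q2⟩,⟨r1,r2⟩,⟨s1,s2⟩⟩ h
    rfl

private lemma reb5R {M : Type*} [AddCommMonoid M] (n : ℕ) (K : ℕ → ℕ → ℕ → ℕ → ℕ → M) :
    (∑ p ∈ antidiagonal n, ∑ q ∈ antidiagonal p.2, ∑ r ∈ antidiagonal q.2,
      ∑ s ∈ antidiagonal r.2, K p.1 r.1 q.1 s.1 s.2) =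
    ∑ w ∈ antidiagonal n, ∑ x ∈ antidiagonal w.2, ∑ y ∈ antidiagonal x.2,
      ∑ z ∈ antidiagonal w.1, K z.1 z.2 x.1 y.1 y.2 := by
  simp only [Finset.sum_sigma']
  refine Finset.sum_nbij'
    (fun a => ⟨(a.1.1 + a.2.2.1.1, a.2.1.1 + (a.2.2.2.1 + a.2.2.2.2)),
      (a.2.1.1, a.2.2.2.1 + a.2.2.2.2), (a.2.2.2.1, a.2.2.2.2), (a.1.1, a.2.2.1.1)⟩)
    (fun b => ⟨(b.2.2.2.1, b.2.1.1 + (b.2.2.2.2 + (b.2.2.1.1 + b.2.2.1.2))),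
      (b.2.1.1, b.2.2.2.2 + (b.2.2.1.1 + b.2.2.1.2)),
      (b.2.2.2.2, b.2.2.1.1 + b.2.2.1.2), (b.2.2.1.1, b.2.2.1.2)⟩) ?_ ?_ ?_ ?_ ?_
  · rintro ⟨⟨p1,p2⟩,⟨q1,q2⟩,⟨r1,r2⟩,⟨s1,s2⟩⟩ h
    simp only [Finset.mem_sigma, Finset.HasAntidiagonal.mem_antidiagonal, and_true, true_and] at h ⊢
    omega
  · rintro ⟨⟨p1,p2⟩,⟨q1,q2⟩,⟨r1,r2⟩,⟨s1,s2⟩⟩ h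
    simp only [Finset.mem_sigma, Finset.HasAntidiagonal.mem_antidiagonal, and_true, true_and] at h ⊢
    omega
  · rintro ⟨⟨p1,p2⟩,⟨q1,q2⟩,⟨r1,r2⟩,⟨s1,s2⟩⟩ h
    simp only [Finset.mem_sigma, Finset.HasAntidiagonal.mem_antidiagonal] at h
    simp only [Sigma.mk.inj_iff, heq_eq_eq, Prod.mk.injEq, and_true, true_and]
    omega
  · rintro ⟨⟨p1,p2⟩,⟨q1,q2⟩,⟨r1,r2⟩,⟨s1,s2⟩⟩ h
    simp only [Finset.mem_sigma, Finset.HasAntidiagonal.mem_antidiagonal] at h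
    simp only [Sigma.mk.inj_iff, heq_eq_eq, Prod.mk.injEq, and_true, true_and]
    omega
  · rintro ⟨⟨p1,p2⟩,⟨q1,q2⟩,⟨r1,r2⟩,⟨s1,s2⟩⟩ h
    rfl

private lemma reb6 {M : Type*} [AddCommMonoid M] (n : ℕ) (G : ℕ → ℕ → ℕ → ℕ → ℕ → ℕ → M) :
    (∑ p ∈ antidiagonal n, ∑ q ∈ antidiagonal p.2, ∑ r ∈ antidiagonal q.2,
      ∑ v ∈ antidiagonal r.2, ∑ u ∈ antidiagonal r.1, G p.1 q.1 u.1 u.2 v.1 v.2) =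
    ∑ p ∈ antidiagonal n, ∑ q ∈ antidiagonal p.2, ∑ w ∈ antidiagonal p.1,
      ∑ x ∈ antidiagonal w.2, ∑ y ∈ antidiagonal x.2, G w.1 x.1 y.1 q.1 y.2 q.2 := by
  simp only [Finset.sum_sigma']
  refine Finset.sum_nbij'
    (fun a => ⟨(a.1.1 + a.2.1.1 + a.2.2.2.2.1 + a.2.2.2.1.1, a.2.2.2.2.2 + a.2.2.2.1.2),
      (a.2.2.2.2.2, a.2.2.2.1.2),
      (a.1.1, a.2.1.1 + a.2.2.2.2.1 + a.2.2.2.1.1),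
      (a.2.1.1, a.2.2.2.2.1 + a.2.2.2.1.1), (a.2.2.2.2.1, a.2.2.2.1.1)⟩)
    (fun b => ⟨(b.2.2.1.1, b.2.2.2.1.1 + (b.2.2.2.2.1 + b.2.1.1 + (b.2.2.2.2.2 + b.2.1.2))),
      (b.2.2.2.1.1, b.2.2.2.2.1 + b.2.1.1 + (b.2.2.2.2.2 + b.2.1.2)),
      (b.2.2.2.2.1 + b.2.1.1, b.2.2.2.2.2 + b.2.1.2),
      (b.2.2.2.2.2, b.2.1.2), (b.2.2.2.2.1, b.2.1.1)⟩) ?_ ?_ ?_ ?_ ?_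
  · rintro ⟨⟨p1,p2⟩,⟨q1,q2⟩,⟨r1,r2⟩,⟨u1,u2⟩,⟨v1,v2⟩⟩ h
    simp only [Finset.mem_sigma, Finset.HasAntidiagonal.mem_antidiagonal, and_true, true_and] at h ⊢
    omega
  · rintro ⟨⟨p1,p2⟩,⟨q1,q2⟩,⟨r1,r2⟩,⟨u1,u2⟩,⟨v1,v2⟩⟩ h
    simp only [Finset.mem_sigma, Finset.HasAntidiagonal.mem_antidiagonal, and_true, true_and] at h ⊢
    omega
  · rintro ⟨⟨p1,p2⟩,⟨q1,q2⟩,⟨r1,r2⟩,⟨u1,u2⟩,⟨v1,v2⟩⟩ h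
    simp only [Finset.mem_sigma, Finset.HasAntidiagonal.mem_antidiagonal] at h
    simp only [Sigma.mk.inj_iff, heq_eq_eq, Prod.mk.injEq, and_true, true_and]
    omega
  · rintro ⟨⟨p1,p2⟩,⟨q1,q2⟩,⟨r1,r2⟩,⟨u1,u2⟩,⟨v1,v2⟩⟩ h
    simp only [Finset.mem_sigma, Finset.HasAntidiagonal.mem_antidiagonal] at h
    simp only [Sigma.mk.inj_iff, heq_eq_eq, Prod.mk.injEq, and_true, true_and]
    omega
  · rintro ⟨⟨p1,p2⟩,⟨q1,q2⟩,⟨r1,r2⟩,⟨u1,u2⟩,⟨v1,v2⟩⟩ h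
    rfl

/-! ### Sequence-level operations -/

private def opL (U : ℕ → A →ₗ[k] A) (f : ℕ → A) : ℕ → A :=
  fun n => ∑ p ∈ antidiagonal n, U p.1 (f p.2)

private def muC (C : ℕ → A →ₗ[k] A →ₗ[k] A) (f g : ℕ → A) : ℕ → A :=
  fun n => ∑ p ∈ antidiagonal n, ∑ q ∈ antidiagonal p.2, C p.1 (f q.1) (g q.2)

private def dd (a : A) : ℕ → A := fun n => if n = 0 then a else 0

private lemma opL_dd (U : ℕ → A →ₗ[k] A) (a : A) : opL U (dd a) = fun m => U m a := by
  funext m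
  show (∑ p ∈ antidiagonal m, U p.1 (dd a p.2)) = U m a
  rw [Finset.sum_eq_single (m, 0)]
  · simp [dd]
  · rintro ⟨b1, b2⟩ hb hne
    have hb' : b1 + b2 = m := Finset.HasAntidiagonal.mem_antidiagonal.mp hb
    have : b2 ≠ 0 := by
      rintro rfl
      exact hne (by simp [Prod.ext_iff]; omega)
    simp [dd, this]
  · intro hm
    exact absurd (Finset.HasAntidiagonal.mem_antidiagonal.mpr (by omega)) hm

private lemma opL_inv (U V : ℕ → A →ₗ[k] A) (hU0 : U 0 = LinearMap.id)
    (hV0 : V 0 = LinearMap.id)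
    (hUV : ∀ n : ℕ, 1 ≤ n → ∑ p ∈ antidiagonal n, (U p.1).comp (V p.2) = 0)
    (f : ℕ → A) : opL U (opL V f) = f := by
  funext n
  show (∑ p ∈ antidiagonal n, U p.1 (∑ q ∈ antidiagonal p.2, V q.1 (f q.2))) = f n
  simp only [map_sum]
  rw [twist3 n (fun i j l => U i (V j (f l)))]
  rw [Finset.sum_eq_single (0, n)]
  · simp [hU0, hV0]
  · rintro ⟨b1, b2⟩ hb hne
    have hb' : b1 + b2 = n := Finset.HasAntidiagonal.mem_antidiagonal.mp hb
    have hb1 : 1 ≤ b1 := by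
      rcases Nat.eq_zero_or_pos b1 with h | h
      · exact absurd (by simp [Prod.ext_iff]; omega) hne
      · exact h
    have : (∑ q ∈ antidiagonal b1, U q.1 (V q.2 (f b2))) =
        (∑ q ∈ antidiagonal b1, (U q.1).comp (V q.2)) (f b2) := by
      simp [LinearMap.sum_apply]
    simp only [this, hUV b1 hb1, LinearMap.zero_apply]
  · intro hm
    exact absurd (Finset.HasAntidiagonal.mem_antidiagonal.mpr (by omega)) hm

private lemma transported_eq (C : ℕ → A →ₗ[k] A →ₗ[k] A) (T S : ℕ → A →ₗ[k] A)
    (a b : A) (n : ℕ) :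
    transported C T S n a b = opL S (muC C (opL T (dd a)) (opL T (dd b))) n := by
  rw [opL_dd, opL_dd]
  simp only [transported, opL, muC, map_sum]

private lemma mu_rep (C : ℕ → A →ₗ[k] A →ₗ[k] A) (T S : ℕ → A →ₗ[k] A)
    (f g : ℕ → A) (n : ℕ) :
    opL S (muC C (opL T f) (opL T g)) n =
    ∑ p ∈ antidiagonal n, ∑ q ∈ antidiagonal p.2,
      transported C T S p.1 (f q.1) (g q.2) := by
  simp only [opL, muC, transported, map_sum, LinearMap.sum_apply]
  exact reb6 n (fun s c t1 a1 t2 a2 => S s (C c (T t1 (f a1)) (T t2 (g a2))))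

private lemma mu_assoc (C : ℕ → A →ₗ[k] A →ₗ[k] A)
    (hassoc : ∀ (n : ℕ) (a b c : A),
      ∑ p ∈ antidiagonal n, C p.1 (C p.2 a b) c =
      ∑ p ∈ antidiagonal n, C p.1 a (C p.2 b c))
    (f g h : ℕ → A) : muC C (muC C f g) h = muC C f (muC C g h) := by
  funext n
  simp only [muC, map_sum, LinearMap.sum_apply]
  rw [reb5L n (fun c1 c2 a1 a2 a3 => C c1 (C c2 (f a1) (g a2)) (h a3)),
    reb5R n (fun c1 c2 a1 a2 a3 => C c1 (f a1) (C c2 (g a2) (h a3)))]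
  refine Finset.sum_congr rfl fun w _ => Finset.sum_congr rfl fun x _ =>
    Finset.sum_congr rfl fun y _ => ?_
  exact hassoc w.1 (f x.1) (g y.1) (h y.2)

private lemma transported_zero_left (C : ℕ → A →ₗ[k] A →ₗ[k] A) (T S : ℕ → A →ₗ[k] A)
    (n : ℕ) (b : A) : transported C T S n 0 b = 0 := by
  simp [transported]

private lemma transported_zero_right (C : ℕ → A →ₗ[k] A →ₗ[k] A) (T S : ℕ → A →ₗ[k] A)
    (n : ℕ) (a : A) : transported C T S n a 0 = 0 := by
  simp [transported]

/-- Transporting a unital formal associative deformation `(C_r)` of a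
unital `k`-algebra `A` along an equivalence transformation `T` (with `T₀ = id`,
`T_r(1) = 0` for `r ≥ 1`, and convolution inverse `S`) yields again a unital formal
associative deformation `(C'_r)` with the same zeroth-order term. -/
theorem transported_deformation_is_unital_deformation
    (C : ℕ → A →ₗ[k] A →ₗ[k] A)
    (hC0 : ∀ a b : A, C 0 a b = a * b)
    (hassoc : ∀ (n : ℕ) (a b c : A),
      ∑ p ∈ antidiagonal n, C p.1 (C p.2 a b) c =
      ∑ p ∈ antidiagonal n, C p.1 a (C p.2 b c))
    (hCu : ∀ r : ℕ, 1 ≤ r → ∀ a : A, C r 1 a = 0 ∧ C r a 1 = 0)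
    (T S : ℕ → A →ₗ[k] A)
    (hT0 : T 0 = LinearMap.id) (hT1 : ∀ r : ℕ, 1 ≤ r → T r 1 = 0)
    (hS0 : S 0 = LinearMap.id)
    (hTS : ∀ n : ℕ, 1 ≤ n → ∑ p ∈ antidiagonal n, (T p.1).comp (S p.2) = 0)
    (hST : ∀ n : ℕ, 1 ≤ n → ∑ p ∈ antidiagonal n, (S p.1).comp (T p.2) = 0) :
    (∀ a b : A, transported C T S 0 a b = a * b) ∧
    (∀ (n : ℕ) (a b c : A),
      ∑ p ∈ antidiagonal n, transported C T S p.1 (transported C T S p.2 a b) c =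
      ∑ p ∈ antidiagonal n, transported C T S p.1 a (transported C T S p.2 b c)) ∧
    (∀ r : ℕ, 1 ≤ r → ∀ a : A,
      transported C T S r 1 a = 0 ∧ transported C T S r a 1 = 0) := by
  refine ⟨?_, ?_, ?_⟩
  · -- zeroth order term
    intro a b
    simp [transported, hT0, hS0, hC0]
  · -- associativity
    intro n a b c
    -- abbreviations
    set g : ℕ → A := fun m => transported C T S m a b with hg
    set g' : ℕ → A := fun m => transported C T S m b c with hg'
    have hga : g = opL S (muC C (opL T (dd a)) (opL T (dd b))) := by
      funext m; exact transported_eq C T S a b m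
    have hgb : g' = opL S (muC C (opL T (dd b)) (opL T (dd c))) := by
      funext m; exact transported_eq C T S b c m
    have hTg : opL T g = muC C (opL T (dd a)) (opL T (dd b)) := by
      rw [hga, opL_inv T S hT0 hS0 hTS]
    have hTg' : opL T g' = muC C (opL T (dd b)) (opL T (dd c)) := by
      rw [hgb, opL_inv T S hT0 hS0 hTS]
    have step1 : (∑ p ∈ antidiagonal n,
        transported C T S p.1 (transported C T S p.2 a b) c) =
        opL S (muC C (opL T g) (opL T (dd c))) n := by
      rw [mu_rep]
      refine Finset.sum_congr rfl fun p _ => ?_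
      rw [Finset.sum_eq_single (p.2, 0)]
      · simp [dd, hg]
      · rintro ⟨b1, b2⟩ hb hne
        have hb' : b1 + b2 = p.2 := Finset.HasAntidiagonal.mem_antidiagonal.mp hb
        have : b2 ≠ 0 := by
          rintro rfl
          exact hne (by simp [Prod.ext_iff]; omega)
        simp [dd, this, transported_zero_right]
      · intro hm
        exact absurd (Finset.HasAntidiagonal.mem_antidiagonal.mpr (by omega)) hm
    have step2 : (∑ p ∈ antidiagonal n,
        transported C T S p.1 a (transported C T S p.2 b c)) =
        opL S (muC C (opL T (dd a)) (opL T g')) n := by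
      rw [mu_rep]
      refine Finset.sum_congr rfl fun p _ => ?_
      rw [Finset.sum_eq_single (0, p.2)]
      · simp [dd, hg']
      · rintro ⟨b1, b2⟩ hb hne
        have hb' : b1 + b2 = p.2 := Finset.HasAntidiagonal.mem_antidiagonal.mp hb
        have : b1 ≠ 0 := by
          rintro rfl
          exact hne (by simp [Prod.ext_iff]; omega)
        simp [dd, this, transported_zero_left]
      · intro hm
        exact absurd (Finset.HasAntidiagonal.mem_antidiagonal.mpr (by omega)) hm
    rw [step1, step2, hTg, hTg', mu_assoc C hassoc]
  · -- unitality
    intro r hr a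
    have key : ∀ x y : A,
        (∀ (p2 : ℕ), (∑ q ∈ antidiagonal p2, ∑ w ∈ antidiagonal q.2,
          C q.1 (T w.1 x) (T w.2 y)) = T p2 a) →
        transported C T S r x y = 0 := by
      intro x y hxy
      have : transported C T S r x y = ∑ p ∈ antidiagonal r, S p.1 (T p.2 a) := by
        simp only [transported]
        refine Finset.sum_congr rfl fun p _ => ?_
        rw [← hxy p.2]
        simp only [map_sum]
      rw [this]
      have : (∑ p ∈ antidiagonal r, S p.1 (T p.2 a)) =
          (∑ p ∈ antidiagonal r, (S p.1).comp (T p.2)) a := by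
        simp [LinearMap.sum_apply]
      rw [this, hST r hr, LinearMap.zero_apply]
    constructor
    · refine key 1 a fun p2 => ?_
      rw [Finset.sum_eq_single (0, p2)]
      · rw [Finset.sum_eq_single (0, p2)]
        · simp [hT0, hC0]
        · rintro ⟨w1, w2⟩ hw hne
          have hw' : w1 + w2 = p2 := Finset.HasAntidiagonal.mem_antidiagonal.mp hw
          have hw1 : 1 ≤ w1 := by
            rcases Nat.eq_zero_or_pos w1 with h | h
            · exact absurd (by simp [Prod.ext_iff]; omega) hne
            · exact h
          simp [hT1 w1 hw1]
        · intro hm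
          exact absurd (Finset.HasAntidiagonal.mem_antidiagonal.mpr (by omega)) hm
      · rintro ⟨q1, q2⟩ hq hne
        have hq' : q1 + q2 = p2 := Finset.HasAntidiagonal.mem_antidiagonal.mp hq
        have hq1 : 1 ≤ q1 := by
          rcases Nat.eq_zero_or_pos q1 with h | h
          · exact absurd (by simp [Prod.ext_iff]; omega) hne
          · exact h
        refine Finset.sum_eq_zero fun w hw => ?_
        rcases Nat.eq_zero_or_pos w.1 with h | h
        · rw [h, hT0]
          simpa using (hCu q1 hq1 (T w.2 a)).1
        · simp [hT1 w.1 h]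
      · intro hm
        exact absurd (Finset.HasAntidiagonal.mem_antidiagonal.mpr (by omega)) hm
    · refine key a 1 fun p2 => ?_
      rw [Finset.sum_eq_single (0, p2)]
      · rw [Finset.sum_eq_single (p2, 0)]
        · simp [hT0, hC0]
        · rintro ⟨w1, w2⟩ hw hne
          have hw' : w1 + w2 = p2 := Finset.HasAntidiagonal.mem_antidiagonal.mp hw
          have hw2 : 1 ≤ w2 := by
            rcases Nat.eq_zero_or_pos w2 with h | h
            · exact absurd (by simp [Prod.ext_iff]; omega) hne
            · exact h
          simp [hT1 w2 hw2]
        · intro hm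
          exact absurd (Finset.HasAntidiagonal.mem_antidiagonal.mpr (by omega)) hm
      · rintro ⟨q1, q2⟩ hq hne
        have hq' : q1 + q2 = p2 := Finset.HasAntidiagonal.mem_antidiagonal.mp hq
        have hq1 : 1 ≤ q1 := by
          rcases Nat.eq_zero_or_pos q1 with h | h
          · exact absurd (by simp [Prod.ext_iff]; omega) hne
          · exact h
        refine Finset.sum_eq_zero fun w hw => ?_
        rcases Nat.eq_zero_or_pos w.2 with h | h
        · rw [h, hT0]
          simpa using (hCu q1 hq1 (T w.1 a)).2
        · simp [hT1 w.2 h]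
      · intro hm
        exact absurd (Finset.HasAntidiagonal.mem_antidiagonal.mpr (by omega)) hm
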